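/- Let d ≥ 1 and let A(n,m) be defined by A(0,0) = 1, A(0,m) = 0 for m ≥ 1, A(n,0) = A(n-1,1), and A(n,m) = d·A(n-1,m-1) + A(n-1,m+1) for n, m ≥ 1. Then the total count Σ_{m ≥ 0} A(n,m) equals Σ_{i=0}^{⌊n/2⌋} ((n − 2i + 1)/(n + 1)) · C(n+1, i) · d^{n−i}. -/

import Mathlib

def Fc (d : ℕ) : ℕ → ℕ → ℕ
  | 0, 0 => 1
  | 0, _+1 => 0
  | n+1, 0 => Fc d n 1
  | n+1, m+1 => d * Fc d n m + Fc d n (m+2)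

lemma Fc_zero (d : ℕ) : ∀ n m, n < m → Fc d n m = 0 := by
  intro n
  induction n with
  | zero => intro m hm; match m, hm with | m+1, _ => rfl
  | succ n ih =>
    intro m hm
    match m, hm with
    | m+1, hm =>
      show d * Fc d n m + Fc d n (m+2) = 0
      rw [ih m (by omega), ih (m+2) (by omega)]; ring

lemma Fc_parity (d : ℕ) : ∀ n m, (n + m) % 2 = 1 → Fc d n m = 0 := by
  intro n
  induction n with
  | zero =>
    intro m hm
    match m with
    | 0 => omega
    | m+1 => rfl
  | succ n ih =>
    intro m hm
    match m with
    | 0 => show Fc d n 1 = 0; exact ih 1 (by omega)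
    | m+1 =>
      show d * Fc d n m + Fc d n (m+2) = 0
      rw [ih m (by omega), ih (m+2) (by omega)]; ring

lemma ball_pascal (n j : ℕ) (hj : j + 1 ≤ n) :
    (((n:ℚ)+1) - 2 * ((j:ℚ)+1) + 1)/(((n:ℚ)+1)+1) * (Nat.choose (n+1+1) (j+1) : ℚ)
      = (((n:ℚ)) - 2 * ((j:ℚ)+1) + 1)/(((n:ℚ))+1) * (Nat.choose (n+1) (j+1) : ℚ)
        + (((n:ℚ)) - 2 * (j:ℚ) + 1)/(((n:ℚ))+1) * (Nat.choose (n+1) j : ℚ) := by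
  have hp : (Nat.choose (n+1+1) (j+1) : ℚ) = Nat.choose (n+1) (j+1) + Nat.choose (n+1) j := by
    rw [Nat.choose_succ_succ (n+1) j]; push_cast; ring
  have hr : (Nat.choose (n+1) (j+1) : ℚ) * ((j:ℚ)+1) = (Nat.choose (n+1) j : ℚ) * ((n:ℚ)+1-j) := by
    have h0 := Nat.choose_succ_right_eq (n+1) j
    have h2 : ((Nat.choose (n+1) (j+1) * (j+1) : ℕ) : ℚ) = ((Nat.choose (n+1) j * (n+1-j) : ℕ) : ℚ) := by
      rw [h0]
    push_cast at h2
    rw [h2, Nat.cast_sub (by omega)]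
    push_cast; ring
  rw [hp]
  have h1 : ((n:ℚ)+1) ≠ 0 := by positivity
  have h2 : ((n:ℚ)+2) ≠ 0 := by positivity
  field_simp
  linear_combination 2 * hr

lemma Fc_val (d : ℕ) : ∀ n i, 2*i ≤ n →
    (Fc d n (n - 2*i) : ℚ)
      = (((n:ℚ) - 2*i + 1)/((n:ℚ)+1)) * (Nat.choose (n+1) i : ℚ) * (d:ℚ)^(n-i) := by
  intro n
  induction n with
  | zero =>
    intro i hi
    have : i = 0 := by omega
    subst this
    norm_num [Fc]
  | succ n ih =>
    intro i hi
    rcases Nat.lt_or_ge (2*i) (n+1) with h | h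
    · -- m = n+1-2i ≥ 1
      have hm : n + 1 - 2*i = (n - 2*i) + 1 := by omega
      rw [hm]
      show ((d * Fc d n (n - 2*i) + Fc d n ((n - 2*i)+2) : ℕ) : ℚ) = _
      rcases Nat.eq_zero_or_pos i with hi0 | hi0
      · subst hi0
        have e : n - 2*0 = n := by omega
        have hz : Fc d n (n + 2) = 0 := Fc_zero d n _ (by omega)
        have ihn := ih 0 (by omega)
        rw [e] at ihn ⊢
        push_cast [hz]
        rw [ihn]
        have h1 : ((n:ℚ)+1) ≠ 0 := by positivity
        have h2 : ((n:ℚ)+2) ≠ 0 := by positivity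
        simp only [Nat.choose_zero_right, Nat.sub_zero]
        push_cast
        field_simp
        ring
      · obtain ⟨j, rfl⟩ : ∃ j, i = j + 1 := ⟨i-1, by omega⟩
        have e2 : n - 2*(j+1) + 2 = n - 2*j := by omega
        rw [e2]
        push_cast
        rw [ih (j+1) (by omega), ih j (by omega)]
        have hb := ball_pascal n j (by omega)
        have hpow1 : n - j = (n - (j+1)) + 1 := by omega
        have hpow2 : n + 1 - (j+1) = (n - (j+1)) + 1 := by omega
        rw [hpow1]
        push_cast at hb ⊢
        linear_combination (d:ℚ)^((n - (j+1)) + 1) * hb.symm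
    · -- m = 0, 2i = n+1
      have h2i : 2*i = n+1 := by omega
      obtain ⟨j, rfl⟩ : ∃ j, i = j + 1 := ⟨i-1, by omega⟩
      have hm : n + 1 - 2*(j+1) = 0 := by omega
      rw [hm]
      show ((Fc d n 1 : ℕ) : ℚ) = _
      have key := ih j (by omega)
      have e : n - 2*j = 1 := by omega
      rw [e] at key
      rw [key]
      have hb := ball_pascal n j (by omega)
      have hn : (n:ℚ) = 2*(j:ℚ)+1 := by
        have : n = 2*j+1 := by omega
        rw [this]; push_cast; ring
      have hz : ((n:ℚ)) - 2 * ((j:ℚ)+1) + 1 = 0 := by rw [hn]; ring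
      rw [hz, zero_div, zero_mul, zero_add] at hb
      have hpow : n + 1 - (j+1) = n - j := by omega
      rw [hpow]
      push_cast at hb ⊢
      linear_combination (d:ℚ)^(n-j) * hb.symm

/-- the total count `Σ_{m ≥ 0} A(n,m)` equals the ballot-number sum
`Σ_{i=0}^{⌊n/2⌋} ((n - 2i + 1)/(n + 1)) C(n+1,i) d^{n-i}`. -/
theorem stmt2 (d : ℕ) (hd : 1 ≤ d) (A : ℕ → ℕ → ℕ)
    (h00 : A 0 0 = 1)
    (h0m : ∀ m, 1 ≤ m → A 0 m = 0)
    (hn0 : ∀ n, 1 ≤ n → A n 0 = A (n - 1) 1)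
    (hnm : ∀ n m, 1 ≤ n → 1 ≤ m → A n m = d * A (n - 1) (m - 1) + A (n - 1) (m + 1))
    (n : ℕ) :
    (∀ m, n < m → A n m = 0) ∧
    ((∑ m ∈ Finset.range (n + 1), A n m : ℕ) : ℚ) =
      ∑ i ∈ Finset.range (n / 2 + 1),
        (((n : ℚ) - 2 * i + 1) / ((n : ℚ) + 1)) * (Nat.choose (n + 1) i : ℚ)
          * (d : ℚ) ^ (n - i) := by
  have hAF : ∀ k m, A k m = Fc d k m := by
    intro k
    induction k with
    | zero =>
      intro m
      match m with
      | 0 => rw [h00]; rfl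
      | m+1 => rw [h0m (m+1) (by omega)]; rfl
    | succ k ih =>
      intro m
      match m with
      | 0 =>
        rw [hn0 (k+1) (by omega)]
        simp only [Nat.add_sub_cancel]
        rw [ih 1]; rfl
      | m+1 =>
        rw [hnm (k+1) (m+1) (by omega) (by omega)]
        simp only [Nat.add_sub_cancel]
        rw [ih m, ih (m+2)]; rfl
  constructor
  · intro m hm; rw [hAF]; exact Fc_zero d n m hm
  · have hsum : ∑ m ∈ Finset.range (n+1), A n m = ∑ m ∈ Finset.range (n+1), Fc d n m :=
      Finset.sum_congr rfl (fun m _ => hAF n m)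
    rw [hsum]
    push_cast
    have h1 : ∑ m ∈ Finset.range (n+1), (Fc d n m : ℚ)
        = ∑ m ∈ (Finset.range (n/2+1)).image (fun i => n - 2*i), (Fc d n m : ℚ) := by
      refine (Finset.sum_subset ?_ ?_).symm
      · intro m hm
        simp only [Finset.mem_image, Finset.mem_range] at hm ⊢
        obtain ⟨i, hi, rfl⟩ := hm; omega
      · intro m hm hm2
        simp only [Finset.mem_image, Finset.mem_range] at hm hm2
        have hodd : (n + m) % 2 = 1 := by
          by_contra hc
          exact hm2 ⟨(n-m)/2, by omega, by omega⟩
        rw [Fc_parity d n m hodd]; norm_num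
    have h2 : ∑ m ∈ (Finset.range (n/2+1)).image (fun i => n - 2*i), (Fc d n m : ℚ)
        = ∑ i ∈ Finset.range (n/2+1), (Fc d n (n - 2*i) : ℚ) := by
      refine Finset.sum_image ?_
      intro x hx y hy hxy
      simp only [Finset.mem_coe, Finset.mem_range] at hx hy hxy
      omega
    rw [h1, h2]
    refine Finset.sum_congr rfl ?_
    intro i hi
    simp only [Finset.mem_range] at hi
    rw [Fc_val d n i (by omega)]
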